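/- Let k be a field, V a finite-dimensional k-vector space, and Γ a connected finite simply laced graph with vertex set I. Suppose for each vertex i we are given a rank-one projector p_i ∈ End_k(V) (so p_i ∘ p_i = p_i and the image of p_i is one-dimensional) such that: for every edge (i,j) of Γ there is a nonzero scalar r_{ij} ∈ k with p_i p_j p_i = r_{ij} · p_i and p_j p_i p_j = r_{ij} · p_j, and for every pair of distinct vertices i, j not joined by an edge, p_i p_j = p_j p_i = 0. Assume that either the images of all the projectors p_i span V, or the intersection of the kernels of all the p_i is zero. Then every invertible endomorphism g of V satisfying g ∘ p_i = p_i ∘ g for all i is a scalar, i.e. g = λ · id_V for some λ ∈ k, λ ≠ 0. -/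

import Mathlib

/-- Let `k` be a field, `V` a finite-dimensional `k`-vector space and `Γ` a
connected finite simply laced graph with vertex set `I`.  Suppose each vertex `i` carries a
rank-one projector `p i` on `V` such that projectors at adjacent vertices are `r`-unbiased for
some nonzero scalar `r` (`p i * p j * p i = r • p i` and `p j * p i * p j = r • p j`), and
projectors at distinct non-adjacent vertices are orthogonal (`p i * p j = p j * p i = 0`).
If either the images of the projectors span `V` or the intersection of their kernels is zero,
then any invertible endomorphism of `V` commuting with all the `p i` is a nonzero scalar
multiple of the identity. -/
theorem configuration_automorphisms_are_scalars
    {k : Type*} [Field k] {V : Type*} [AddCommGroup V] [Module k V] [FiniteDimensional k V]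
    {I : Type*} [Fintype I] (G : SimpleGraph I) (hconn : G.Connected)
    (p : I → Module.End k V)
    (hproj : ∀ i, p i * p i = p i)
    (hrank : ∀ i, Module.finrank k (LinearMap.range (p i)) = 1)
    (hadj : ∀ i j, G.Adj i j → ∃ r : k, r ≠ 0 ∧
      p i * p j * p i = r • p i ∧ p j * p i * p j = r • p j)
    (hnadj : ∀ i j, i ≠ j → ¬ G.Adj i j → p i * p j = 0 ∧ p j * p i = 0)
    (hmin : (⨆ i, LinearMap.range (p i)) = ⊤ ∨ (⨅ i, LinearMap.ker (p i)) = ⊥)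
    (g : V ≃ₗ[k] V)
    (hg : ∀ i, (g : Module.End k V) * p i = p i * (g : Module.End k V)) :
    ∃ c : k, c ≠ 0 ∧ (g : Module.End k V) = c • (1 : Module.End k V) := by

  classical
  have hcomm : ∀ i x, g (p i x) = p i (g x) := by
    intro i x
    have := LinearMap.ext_iff.mp (hg i) x
    simpa using this
  -- choose a nonzero spanning vector of range (p i)
  have hspan : ∀ i, ∃ w : V, w ∈ LinearMap.range (p i) ∧ w ≠ 0 ∧
      ∀ u ∈ LinearMap.range (p i), ∃ d : k, d • w = u := by
    intro i
    obtain ⟨v, hv0, hv⟩ := finrank_eq_one_iff'.mp (hrank i)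
    refine ⟨v.1, v.2, by simpa [Submodule.coe_eq_zero] using hv0, ?_⟩
    intro u hu
    obtain ⟨d, hd⟩ := hv ⟨u, hu⟩
    exact ⟨d, by simpa [Subtype.ext_iff] using hd⟩
  choose w hwmem hwne hwspan using hspan
  -- g preserves each range
  have hginv : ∀ i, ∀ u ∈ LinearMap.range (p i), g u ∈ LinearMap.range (p i) := by
    intro i u hu
    obtain ⟨x, rfl⟩ := hu
    exact ⟨g x, (hcomm i x).symm⟩
  -- eigenvalue on each range
  have hc : ∀ i, ∃ c : k, g (w i) = c • w i := by
    intro i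
    obtain ⟨d, hd⟩ := hwspan i (g (w i)) (hginv i _ (hwmem i))
    exact ⟨d, hd.symm⟩
  choose c hc using hc
  -- g acts as c i on the whole range p i
  have hscal : ∀ i, ∀ u ∈ LinearMap.range (p i), g u = c i • u := by
    intro i u hu
    obtain ⟨d, rfl⟩ := hwspan i u hu
    rw [map_smul, hc i, smul_comm]
  have hpw : ∀ i, p i (w i) = w i := by
    intro i
    obtain ⟨x, hx⟩ := hwmem i
    rw [← hx, ← Module.End.mul_apply, hproj i]
  -- adjacent vertices share eigenvalue
  have hedge : ∀ i j, G.Adj i j → c i = c j := by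
    intro i j hij
    obtain ⟨r, hr, h1, h2⟩ := hadj i j hij
    set u := p j (w i) with hu
    have hu0 : u ≠ 0 := by
      intro h
      have : (p i * p j * p i) (w i) = r • w i := by rw [h1]; simp [hpw i]
      rw [Module.End.mul_apply, Module.End.mul_apply, hpw i, ← hu, h, map_zero] at this
      exact hwne i (by simpa [hr, eq_comm, smul_eq_zero] using this.symm)
    have humem : u ∈ LinearMap.range (p j) := ⟨w i, rfl⟩
    have e1 : g u = c i • u := by
      rw [hu, hcomm j, hc i, map_smul]
    have e2 : g u = c j • u := hscal j u humem
    have : (c i - c j) • u = 0 := by rw [sub_smul, ← e1, ← e2, sub_self]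
    exact sub_eq_zero.mp ((smul_eq_zero.mp this).resolve_right hu0)
  -- connectivity: c is constant
  have hconst : ∀ i j, c i = c j := by
    intro i j
    obtain ⟨wk⟩ := hconn i j
    induction wk with
    | nil => rfl
    | cons h _ ih => exact (hedge _ _ h).trans ih
  obtain ⟨i0⟩ := hconn.nonempty
  refine ⟨c i0, ?_, ?_⟩
  · intro h0
    apply hwne i0
    apply g.injective
    rw [hc i0, h0, zero_smul, map_zero]
  · have key : ∀ x : V, g x = c i0 • x := by
      rcases hmin with htop | hbot
      · intro x
        have hx : x ∈ ⨆ i, LinearMap.range (p i) := htop ▸ Submodule.mem_top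
        refine Submodule.iSup_induction (motive := fun y => g y = c i0 • y) _ hx ?_ ?_ ?_
        · intro i u hu
          rw [hscal i u hu, hconst i i0]
        · simp
        · intro a b ha hb
          rw [map_add, ha, hb, smul_add]
      · intro x
        have : g x - c i0 • x ∈ ⨅ i, LinearMap.ker (p i) := by
          apply Submodule.mem_iInf _ |>.mpr
          intro i
          have : p i (g x) = c i0 • p i x := by
            rw [← hcomm i, hscal i (p i x) ⟨x, rfl⟩, hconst i i0]
          simp [LinearMap.mem_ker, map_sub, this]
        rw [hbot] at this
        exact sub_eq_zero.mp (Submodule.mem_bot k |>.mp this)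
    ext x
    simpa using key x
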